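/- arXiv:2512.21556 — 2 statements merged into one kernel-verified Lean document; each statement's English description precedes it below -/
import Mathlib

section
/- Let F be a closed subset of a hypergroup H. Then the quotient H//F := {FhF : h ∈ H} with hypermultiplication a^F · b^F := {x^F : x ∈ aFb} (where h^F := FhF) is a hypergroup with identity 1^F = F and involution (h^F)* = (h*)^F. -/
/-- A hypergroup: a set with a hypermultiplication, identity and involution
satisfying (H1), (H2), (H3). -/
structure Hypergroup (H : Type*) where
  hmul : H → H → Set H
  one : H
  star : H → H
  assoc : ∀ p q r : H, (⋃ x ∈ hmul q r, hmul p x) = ⋃ x ∈ hmul p q, hmul x r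
  hmul_one : ∀ s : H, hmul s one = {s}
  inv_left : ∀ p q r : H, r ∈ hmul p q → q ∈ hmul (star p) r
  inv_right : ∀ p q r : H, r ∈ hmul p q → p ∈ hmul r (star q)

namespace Hypergroup

variable {H : Type*} (G : Hypergroup H)

/-- Complex (set) product: `AB = ⋃_{a ∈ A, b ∈ B} ab`. -/
def smul (A B : Set H) : Set H := ⋃ a ∈ A, ⋃ b ∈ B, G.hmul a b

/-- `A* = { a* | a ∈ A }`. -/
def sstar (A : Set H) : Set H := G.star '' A

/-- A nonempty subset `F` is closed if `F*F ⊆ F`. -/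
def IsClosed (F : Set H) : Prop := F.Nonempty ∧ G.smul (G.sstar F) F ⊆ F

/-- `F` is normal in `K`: `Fk ⊆ kF` for all `k ∈ K`. -/
def IsNormalIn (F K : Set H) : Prop := ∀ k ∈ K, G.smul F {k} ⊆ G.smul {k} F

/-- `F` is strongly normal in `K`: `k*Fk ⊆ F` for all `k ∈ K`. -/
def IsStronglyNormalIn (F K : Set H) : Prop :=
  ∀ k ∈ K, G.smul (G.smul {G.star k} F) {k} ⊆ F

/-- An element `s` is thin if `s*s = {1}`. -/
def IsThinElem (s : H) : Prop := G.hmul (G.star s) s = {G.one}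

/-- A hypergroup is thin if all elements are thin. -/
def IsThin : Prop := ∀ s : H, G.IsThinElem s

/-- The center `Z(H) = {h | hx = xh for all x, h*h = {1}}`. -/
def center : Set H :=
  {h | (∀ x : H, G.hmul h x = G.hmul x h) ∧ G.hmul (G.star h) h = {G.one}}

/-- The class `h^F := FhF`. -/
def cls (F : Set H) (h : H) : Set H := G.smul (G.smul F {h}) F

/-- The quotient set `H//F := { h^F | h ∈ H }`. -/
def quotSet (F : Set H) : Set (Set H) := Set.range (G.cls F)

/-- The class `h^F` as an element of `H//F`. -/
def qcls (F : Set H) (h : H) : G.quotSet F := ⟨G.cls F h, h, rfl⟩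

/-- The full preimage in `H` of the center of the quotient `H//T`:
`{h | h^T ∈ Z(H//T)}`, i.e. `h^T` commutes with all classes `y^T` and
`(h^T)*(h^T) = {1^T} = {T}`. -/
def qCenterPre (T : Set H) : Set H :=
  {h | (∀ y : H, G.cls T '' (G.smul (G.smul {h} T) {y}) =
          G.cls T '' (G.smul (G.smul {y} T) {h})) ∧
       G.cls T '' (G.smul (G.smul {G.star h} T) {h}) = {T}}

/-- The upper central series: `Z₀(H) = {1}`, and `Zᵢ₊₁(H)` is the full preimage
of `Z(H//Zᵢ(H))`, i.e. `Zᵢ₊₁(H)//Zᵢ(H) = Z(H//Zᵢ(H))`. -/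
def upperCentral : ℕ → Set H
  | 0 => {G.one}
  | n + 1 => G.qCenterPre (upperCentral n)

/-- A hypergroup is weakly nilpotent if `Zₙ(H) = H` for some `n`. -/
def WeaklyNilpotent : Prop := ∃ n : ℕ, G.upperCentral n = Set.univ

/-- `F` is subnormal in `K` via a chain of successively normal closed subsets. -/
def IsSubnormalIn (F K : Set H) : Prop :=
  ∃ n : ℕ, ∃ C : ℕ → Set H, C 0 = F ∧ C n = K ∧
    ∀ i < n, C i ⊆ C (i + 1) ∧ G.IsClosed (C (i + 1)) ∧ G.IsNormalIn (C i) (C (i + 1))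

/-- The quotient `K//N` is thin: `(k^N)*(k^N) = {1^N}` for all `k ∈ K`. -/
def QuotThin (N K : Set H) : Prop :=
  ∀ k ∈ K, G.cls N '' (G.smul (G.smul {G.star k} N) {k}) = {N}

/-- A residually-thin chain from `{1}` to `K`. -/
def RTChainOn (K : Set H) (n : ℕ) (C : ℕ → Set H) : Prop :=
  C 0 = {G.one} ∧ C n = K ∧
    ∀ i < n, C i ⊆ C (i + 1) ∧ G.IsClosed (C (i + 1)) ∧ G.QuotThin (C i) (C (i + 1))

/-- The valency `n_K = ∏ |Cᵢ₊₁//Cᵢ|` computed along some RT chain for `K`. -/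
def HasValencyOn (K : Set H) (m : ℕ) : Prop :=
  ∃ n C, G.RTChainOn K n C ∧
    m = ∏ i ∈ Finset.range n, Nat.card (G.cls (C i) '' C (i + 1))

/-- A closed `p`-subset: a closed subset whose valency is a power of `p`. -/
def PSubsetOn (p : ℕ) (K : Set H) : Prop :=
  G.IsClosed K ∧ ∃ m k : ℕ, G.HasValencyOn K m ∧ m = p ^ k

/-- `h` is `p`-valenced in `K`: for every subnormal closed `p`-subset `U` of `K`
such that `(h*)^U h^U` consists of thin elements of the quotient,
`n_{(h*)^U h^U} = |(h*)^U h^U|` is a power of `p`. -/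
def PValencedElemOn (p : ℕ) (K : Set H) (h : H) : Prop :=
  ∀ U : Set H, G.IsClosed U → U ⊆ K → G.IsSubnormalIn U K → G.PSubsetOn p U →
    (∀ x ∈ G.smul (G.smul {G.star h} U) {h},
      G.cls U '' (G.smul (G.smul {G.star x} U) {x}) = {U}) →
    ∃ k : ℕ, Nat.card (G.cls U '' (G.smul (G.smul {G.star h} U) {h})) = p ^ k

/-- `K` is `p`-valenced if all its elements are. -/
def PValencedOn (p : ℕ) (K : Set H) : Prop := ∀ h ∈ K, G.PValencedElemOn p K h

end Hypergroup

namespace Hypergroup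

variable {H : Type*} {G : Hypergroup H}


lemma mem_smul {A B : Set H} {z : H} :
    z ∈ G.smul A B ↔ ∃ a ∈ A, ∃ b ∈ B, z ∈ G.hmul a b := by
  simp [smul]

lemma mem_smul_of {A B : Set H} {a b z : H} (ha : a ∈ A) (hb : b ∈ B)
    (hz : z ∈ G.hmul a b) : z ∈ G.smul A B := mem_smul.2 ⟨a, ha, b, hb, hz⟩

lemma smul_mono {A A' B B' : Set H} (hA : A ⊆ A') (hB : B ⊆ B') :
    G.smul A B ⊆ G.smul A' B' := by
  intro z hz
  obtain ⟨a, ha, b, hb, h⟩ := mem_smul.1 hz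
  exact mem_smul_of (hA ha) (hB hb) h

lemma smul_assoc' (A B C : Set H) :
    G.smul (G.smul A B) C = G.smul A (G.smul B C) := by
  ext z
  have key : ∀ a b c : H,
      (∃ x ∈ G.hmul a b, z ∈ G.hmul x c) ↔ ∃ x ∈ G.hmul b c, z ∈ G.hmul a x := by
    intro a b c
    have h := G.assoc a b c
    constructor
    · rintro ⟨x, hx, hz⟩
      have : z ∈ ⋃ x ∈ G.hmul a b, G.hmul x c := Set.mem_biUnion hx hz
      rw [← h] at this
      simpa using this
    · rintro ⟨x, hx, hz⟩
      have : z ∈ ⋃ x ∈ G.hmul b c, G.hmul a x := Set.mem_biUnion hx hz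
      rw [h] at this
      simpa using this
  constructor
  · intro hz
    obtain ⟨x, hx, c, hc, hz⟩ := mem_smul.1 hz
    obtain ⟨a, ha, b, hb, hx⟩ := mem_smul.1 hx
    obtain ⟨y, hy, hzy⟩ := (key a b c).1 ⟨x, hx, hz⟩
    exact mem_smul_of ha (mem_smul_of hb hc hy) hzy
  · intro hz
    obtain ⟨a, ha, x, hx, hz⟩ := mem_smul.1 hz
    obtain ⟨b, hb, c, hc, hx⟩ := mem_smul.1 hx
    obtain ⟨y, hy, hzy⟩ := (key a b c).2 ⟨x, hx, hz⟩
    exact mem_smul_of (mem_smul_of ha hb hy) hc hzy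

lemma one_mem_hmul_star_self (s : H) : G.one ∈ G.hmul (G.star s) s := by
  have hs : s ∈ G.hmul s G.one := by rw [G.hmul_one]; rfl
  exact G.inv_left s G.one s hs

lemma star_star (s : H) : G.star (G.star s) = s := by
  have h1 := one_mem_hmul_star_self (G := G) s
  have h2 := G.inv_left (G.star s) s G.one h1
  rw [G.hmul_one] at h2
  exact h2.symm

lemma one_mem_hmul_self_star (s : H) : G.one ∈ G.hmul s (G.star s) := by
  have := one_mem_hmul_star_self (G := G) (G.star s)
  rwa [star_star] at this

lemma mem_one_hmul (s : H) : s ∈ G.hmul G.one s := by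
  have h := one_mem_hmul_self_star (G := G) s
  have := G.inv_right s (G.star s) G.one h
  rwa [star_star] at this

lemma star_mem_hmul {a b z : H} (h : z ∈ G.hmul a b) :
    G.star z ∈ G.hmul (G.star b) (G.star a) := by
  have h1 := G.inv_right a b z h
  have h2 := G.inv_left z (G.star b) a h1
  exact G.inv_right (G.star z) a (G.star b) h2

lemma sstar_smul (A B : Set H) :
    G.sstar (G.smul A B) = G.smul (G.sstar B) (G.sstar A) := by
  ext z
  constructor
  · rintro ⟨w, hw, rfl⟩
    obtain ⟨a, ha, b, hb, h⟩ := mem_smul.1 hw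
    exact mem_smul_of ⟨b, hb, rfl⟩ ⟨a, ha, rfl⟩ (star_mem_hmul h)
  · intro hz
    obtain ⟨b', ⟨b, hb, rfl⟩, a', ⟨a, ha, rfl⟩, h⟩ := mem_smul.1 hz
    refine ⟨G.star z, ?_, star_star z⟩
    have := star_mem_hmul h
    rw [star_star, star_star] at this
    exact mem_smul_of ha hb this

lemma sstar_singleton (a : H) : G.sstar {a} = {G.star a} := by
  simp [sstar]


section Closed

variable {F : Set H} (hF : G.IsClosed F)
include hF

lemma one_mem_closed : G.one ∈ F := by
  obtain ⟨f, hf⟩ := hF.1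
  exact hF.2 (mem_smul_of ⟨f, hf, rfl⟩ hf (one_mem_hmul_star_self f))

lemma sstar_closed : G.sstar F = F := by
  have h1 : G.sstar F ⊆ F := by
    rintro _ ⟨f, hf, rfl⟩
    have : G.star f ∈ G.hmul (G.star f) G.one := by rw [G.hmul_one]; rfl
    exact hF.2 (mem_smul_of ⟨f, hf, rfl⟩ (one_mem_closed hF) this)
  refine h1.antisymm fun f hf => ?_
  exact ⟨G.star f, h1 ⟨f, hf, rfl⟩, star_star f⟩

lemma smul_closed_self : G.smul F F = F := by
  refine Set.Subset.antisymm ?_ fun f hf => ?_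
  · intro z hz
    apply hF.2
    rwa [sstar_closed hF]
  · have : f ∈ G.hmul f G.one := by rw [G.hmul_one]; rfl
    exact mem_smul_of hf (one_mem_closed hF) this

lemma mem_cls_self (h : H) : h ∈ G.cls F h := by
  exact mem_smul_of (mem_smul_of (one_mem_closed hF) rfl (mem_one_hmul h))
    (one_mem_closed hF) (by rw [G.hmul_one]; rfl)

lemma smul_F_cls (h : H) : G.smul F (G.cls F h) = G.cls F h := by
  unfold cls
  rw [← smul_assoc', ← smul_assoc', smul_closed_self hF]

lemma smul_cls_F (h : H) : G.smul (G.cls F h) F = G.cls F h := by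
  unfold cls
  rw [smul_assoc' (G.smul F {h}) F F, smul_closed_self hF]

lemma sstar_cls (h : H) : G.sstar (G.cls F h) = G.cls F (G.star h) := by
  unfold cls
  rw [sstar_smul, sstar_smul, sstar_singleton, sstar_closed hF,
    ← smul_assoc', smul_assoc' F {G.star h} F]

lemma cls_subset_of_mem {a b : H} (hb : b ∈ G.cls F a) :
    G.cls F b ⊆ G.cls F a := by
  have : G.cls F b ⊆ G.smul (G.smul F (G.cls F a)) F :=
    smul_mono (smul_mono subset_rfl (Set.singleton_subset_iff.2 hb)) subset_rfl
  rwa [smul_F_cls hF, smul_cls_F hF] at this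

lemma mem_cls_symm {a b : H} (hb : b ∈ G.cls F a) : a ∈ G.cls F b := by
  obtain ⟨u, hu, g, hg, hbug⟩ := mem_smul.1 hb
  obtain ⟨f, hf, a', ha', hufa⟩ := mem_smul.1 hu
  rw [Set.mem_singleton_iff.1 ha'] at hufa
  have h1 : a ∈ G.hmul (G.star f) u := G.inv_left f a u hufa
  have h2 : u ∈ G.hmul b (G.star g) := G.inv_right u g b hbug
  have hfs : G.star f ∈ F := by rw [← sstar_closed hF]; exact ⟨f, hf, rfl⟩
  have hgs : G.star g ∈ F := by rw [← sstar_closed hF]; exact ⟨g, hg, rfl⟩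
  have : a ∈ G.smul (G.smul F {b}) F := by
    rw [smul_assoc']
    exact mem_smul_of hfs (mem_smul_of rfl hgs h2) h1
  exact this

lemma cls_eq_of_mem {a b : H} (hb : b ∈ G.cls F a) : G.cls F b = G.cls F a :=
  (cls_subset_of_mem hF hb).antisymm (cls_subset_of_mem hF (mem_cls_symm hF hb))

lemma cls_subset_iff {M : Set H} (hsat : G.smul (G.smul F M) F ⊆ M) {c : H} :
    G.cls F c ⊆ M ↔ c ∈ M := by
  constructor
  · intro h; exact h (mem_cls_self hF c)
  · intro hc
    refine fun z hz => hsat ?_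
    exact smul_mono (smul_mono subset_rfl (Set.singleton_subset_iff.2 hc)) subset_rfl hz

lemma coe_sat_left (A : G.quotSet F) : G.smul F (A : Set H) = A := by
  obtain ⟨a, ha⟩ := A.2
  rw [← ha, smul_F_cls hF]

lemma coe_sat_right (A : G.quotSet F) : G.smul (A : Set H) F = A := by
  obtain ⟨a, ha⟩ := A.2
  rw [← ha, smul_cls_F hF]

omit hF in
lemma sat_help {S T : Set H} (hS : G.smul F S = S) (hT : G.smul T F = T) :
    G.smul (G.smul F (G.smul (G.smul S F) T)) F ⊆ G.smul (G.smul S F) T := by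
  rw [← smul_assoc' F (G.smul S F) T, ← smul_assoc' F S F, hS,
    smul_assoc' (G.smul S F) T F, hT]

lemma cls_one : G.cls F G.one = F := by
  unfold cls
  have h1 : G.smul F {G.one} = F := by
    ext z
    rw [mem_smul]
    constructor
    · rintro ⟨f, hf, b, hb, hz⟩
      rw [Set.mem_singleton_iff] at hb; subst hb
      rw [G.hmul_one] at hz
      rwa [hz]
    · intro hz
      exact ⟨z, hz, G.one, rfl, by rw [G.hmul_one]; rfl⟩
  rw [h1, smul_closed_self hF]

omit hF in
lemma mem_FXF {X : Set H} {c : H} (hc : c ∈ G.smul (G.smul F X) F) :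
    ∃ y ∈ X, c ∈ G.cls F y := by
  obtain ⟨u, hu, g, hg, hc⟩ := mem_smul.1 hc
  obtain ⟨f, hf, y, hy, hu⟩ := mem_smul.1 hu
  exact ⟨y, hy, mem_smul_of (mem_smul_of hf rfl hu) hg hc⟩

lemma M_eq (a b : H) :
    G.smul (G.smul (G.cls F a) F) (G.cls F b) =
      G.smul (G.smul F (G.smul (G.smul {a} F) {b})) F := by
  rw [smul_assoc' (G.cls F a) F (G.cls F b), smul_F_cls hF]
  show G.smul (G.smul (G.smul F {a}) F) (G.cls F b) = _
  rw [smul_assoc' (G.smul F {a}) F (G.cls F b), smul_F_cls hF]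
  show _ = G.smul (G.smul F (G.smul (G.smul {a} F) {b})) F
  rw [← smul_assoc' F (G.smul {a} F) {b}, ← smul_assoc' F {a} F]
  show G.smul (G.smul F {a}) (G.smul (G.smul F {b}) F) = _
  rw [← smul_assoc' (G.smul F {a}) (G.smul F {b}) F,
    ← smul_assoc' (G.smul F {a}) F {b}]

lemma rep (A : G.quotSet F) :
    ∃ a, (A : Set H) = G.cls F a ∧ a ∈ (A : Set H) := by
  obtain ⟨a, ha⟩ := A.2
  exact ⟨a, ha.symm, ha ▸ mem_cls_self hF a⟩


def qmul (A B : G.quotSet F) : Set (G.quotSet F) :=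
  {C | (C : Set H) ⊆ G.smul (G.smul (A : Set H) F) (B : Set H)}

def qstar (A : G.quotSet F) : G.quotSet F :=
  ⟨G.sstar A, by
    obtain ⟨a, ha⟩ := A.2
    exact ⟨G.star a, by rw [← ha, sstar_cls hF]⟩⟩

omit hF in
lemma mem_qmul {A B C : G.quotSet F} :
    C ∈ qmul A B ↔ (C : Set H) ⊆ G.smul (G.smul (A : Set H) F) (B : Set H) :=
  Iff.rfl

lemma qmul_sat (A B : G.quotSet F) :
    G.smul (G.smul F (G.smul (G.smul (A : Set H) F) (B : Set H))) F ⊆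
      G.smul (G.smul (A : Set H) F) (B : Set H) :=
  sat_help (coe_sat_left hF A) (coe_sat_right hF B)

lemma qmul_union_left (P Q R : G.quotSet F) :
    (⋃ X ∈ qmul Q R, qmul P X) =
      {D : G.quotSet F | (D : Set H) ⊆
        G.smul (G.smul (P : Set H) F) (G.smul (G.smul (Q : Set H) F) (R : Set H))} := by
  ext D
  simp only [Set.mem_iUnion, Set.mem_setOf_eq, exists_prop]
  constructor
  · rintro ⟨X, hX, hD⟩
    exact hD.trans (smul_mono subset_rfl hX)
  · intro hD
    obtain ⟨d, hDd, hdD⟩ := rep hF D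
    obtain ⟨u, hu, x, hx, hdx⟩ := mem_smul.1 (hD hdD)
    refine ⟨G.qcls F x, ?_, ?_⟩
    · exact (cls_subset_iff hF (qmul_sat hF Q R)).2 hx
    · show (D : Set H) ⊆ G.smul (G.smul (P : Set H) F) (G.cls F x)
      rw [hDd]
      refine (cls_subset_iff hF (sat_help (coe_sat_left hF P) (smul_cls_F hF x))).2 ?_
      exact mem_smul_of hu (mem_cls_self hF x) hdx

lemma qmul_union_right (P Q R : G.quotSet F) :
    (⋃ X ∈ qmul P Q, qmul X R) =
      {D : G.quotSet F | (D : Set H) ⊆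
        G.smul (G.smul (G.smul (G.smul (P : Set H) F) (Q : Set H)) F) (R : Set H)} := by
  ext D
  simp only [Set.mem_iUnion, Set.mem_setOf_eq, exists_prop]
  constructor
  · rintro ⟨X, hX, hD⟩
    exact hD.trans (smul_mono (smul_mono hX subset_rfl) subset_rfl)
  · intro hD
    obtain ⟨d, hDd, hdD⟩ := rep hF D
    have hd := hD hdD
    rw [smul_assoc' (G.smul (G.smul (P : Set H) F) (Q : Set H)) F (R : Set H),
      coe_sat_left hF R] at hd
    obtain ⟨x, hx, v, hv, hdx⟩ := mem_smul.1 hd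
    refine ⟨G.qcls F x, ?_, ?_⟩
    · exact (cls_subset_iff hF (qmul_sat hF P Q)).2 hx
    · show (D : Set H) ⊆ G.smul (G.smul (G.cls F x) F) (R : Set H)
      rw [hDd]
      refine (cls_subset_iff hF (sat_help (smul_F_cls hF x) (coe_sat_right hF R))).2 ?_
      refine mem_smul_of ?_ hv hdx
      rw [smul_cls_F hF]
      exact mem_cls_self hF x

lemma q_assoc (P Q R : G.quotSet F) :
    (⋃ X ∈ qmul Q R, qmul P X) = ⋃ X ∈ qmul P Q, qmul X R := by
  rw [qmul_union_left hF P Q R, qmul_union_right hF P Q R]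
  have : G.smul (G.smul (P : Set H) F) (G.smul (G.smul (Q : Set H) F) (R : Set H)) =
      G.smul (G.smul (G.smul (G.smul (P : Set H) F) (Q : Set H)) F) (R : Set H) := by
    rw [smul_assoc' (G.smul (G.smul (P : Set H) F) (Q : Set H)) F (R : Set H),
      smul_assoc' (G.smul (P : Set H) F) (Q : Set H) (G.smul F (R : Set H)),
      smul_assoc' (Q : Set H) F (R : Set H)]
  rw [this]

lemma q_hmul_one (S : G.quotSet F) : qmul S (G.qcls F G.one) = {S} := by
  have hM : G.smul (G.smul (S : Set H) F) ((G.qcls F G.one : G.quotSet F) : Set H)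
      = (S : Set H) := by
    show G.smul (G.smul (S : Set H) F) (G.cls F G.one) = (S : Set H)
    rw [cls_one hF, smul_assoc', smul_closed_self hF, coe_sat_right hF S]
  ext C
  constructor
  · intro hC
    have hC' : (C : Set H) ⊆ (S : Set H) := hM ▸ hC
    obtain ⟨c, hCc, hcC⟩ := rep hF C
    obtain ⟨s, hSs, _⟩ := rep hF S
    have : G.cls F c = G.cls F s := cls_eq_of_mem hF (hSs ▸ hC' hcC)
    exact Set.mem_singleton_iff.2 (Subtype.ext (by rw [hCc, this, ← hSs]))
  · intro hC
    rw [Set.mem_singleton_iff] at hC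
    subst hC
    show (C : Set H) ⊆ _
    rw [hM]

lemma q_inv_left (P Q R : G.quotSet F) (h : R ∈ qmul P Q) :
    Q ∈ qmul (qstar hF P) R := by
  obtain ⟨r, hRr, hrR⟩ := rep hF R
  obtain ⟨p, hPp, _⟩ := rep hF P
  obtain ⟨q, hQq, hqQ⟩ := rep hF Q
  obtain ⟨u, hu, q', hq', hrq⟩ := mem_smul.1 (h hrR)
  have hq'2 : q' ∈ G.hmul (G.star u) r := G.inv_left u q' r hrq
  have hS : G.smul F (G.sstar (P : Set H)) = G.sstar (P : Set H) := by
    rw [hPp, sstar_cls hF, smul_F_cls hF]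
  have hsu : G.star u ∈ G.smul (G.sstar (P : Set H)) F := by
    have h2 : G.star u ∈ G.sstar (G.smul (P : Set H) F) := ⟨u, hu, rfl⟩
    rw [sstar_smul, sstar_closed hF, hS] at h2
    rw [hPp, sstar_cls hF, smul_cls_F hF]
    rwa [hPp, sstar_cls hF] at h2
  have hq'T : q' ∈ G.smul (G.smul (G.sstar (P : Set H)) F) (R : Set H) :=
    mem_smul_of hsu hrR hq'2
  show (Q : Set H) ⊆ G.smul (G.smul (G.sstar (P : Set H)) F) (R : Set H)
  have h5 : G.cls F q' = G.cls F q := cls_eq_of_mem hF (hQq ▸ hq')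
  rw [hQq, ← h5]
  exact (cls_subset_iff hF (sat_help hS (coe_sat_right hF R))).2 hq'T

lemma q_inv_right (P Q R : G.quotSet F) (h : R ∈ qmul P Q) :
    P ∈ qmul R (qstar hF Q) := by
  obtain ⟨r, hRr, hrR⟩ := rep hF R
  obtain ⟨p, hPp, _⟩ := rep hF P
  obtain ⟨q, hQq, _⟩ := rep hF Q
  have hr : r ∈ G.smul (P : Set H) (Q : Set H) := by
    have := h hrR
    rwa [smul_assoc', coe_sat_left hF Q] at this
  obtain ⟨p', hp', v, hv, hrp⟩ := mem_smul.1 hr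
  have hp'2 : p' ∈ G.hmul r (G.star v) := G.inv_right p' v r hrp
  have hT : G.smul (G.sstar (Q : Set H)) F = G.sstar (Q : Set H) := by
    rw [hQq, sstar_cls hF, smul_cls_F hF]
  have hp'T : p' ∈ G.smul (G.smul (R : Set H) F) (G.sstar (Q : Set H)) := by
    refine mem_smul_of ?_ ⟨v, hv, rfl⟩ hp'2
    rw [coe_sat_right hF R]
    exact hrR
  show (P : Set H) ⊆ G.smul (G.smul (R : Set H) F) (G.sstar (Q : Set H))
  have h5 : G.cls F p' = G.cls F p := cls_eq_of_mem hF (hPp ▸ hp')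
  rw [hPp, ← h5]
  exact (cls_subset_iff hF (sat_help (coe_sat_left hF R) hT)).2 hp'T

end Closed


end Hypergroup

open Hypergroup

/-- for a closed subset `F`, the quotient `H//F = {FhF | h ∈ H}`
carries a hypergroup structure with `a^F · b^F = {x^F | x ∈ aFb}`, identity
`1^F = F` and involution `(h^F)* = (h*)^F`. -/
theorem quotient_hypergroup {H : Type*} (G : Hypergroup H) (F : Set H)
    (hF : G.IsClosed F) :
    ∃ Q : Hypergroup (G.quotSet F),
      (∀ a b : H, Q.hmul (G.qcls F a) (G.qcls F b) =
        {x : G.quotSet F | ∃ y ∈ G.smul (G.smul {a} F) {b}, x = G.qcls F y}) ∧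
      Q.one = G.qcls F G.one ∧ (G.qcls F G.one : Set H) = F ∧
      ∀ h : H, Q.star (G.qcls F h) = G.qcls F (G.star h) := by
  refine ⟨{ hmul := qmul
            one := G.qcls F G.one
            star := qstar hF
            assoc := q_assoc hF
            hmul_one := q_hmul_one hF
            inv_left := q_inv_left hF
            inv_right := q_inv_right hF }, ?_, rfl, cls_one hF, ?_⟩
  · intro a b
    ext C
    simp only [Set.mem_setOf_eq]
    constructor
    · intro hC
      obtain ⟨c, hCc, hcC⟩ := rep hF C
      have hc' : c ∈ G.smul (G.smul (G.cls F a) F) (G.cls F b) := hC hcC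
      rw [M_eq hF a b] at hc'
      obtain ⟨y, hy, hcy⟩ := mem_FXF hc'
      exact ⟨y, hy, Subtype.ext (by rw [hCc]; exact cls_eq_of_mem hF hcy)⟩
    · rintro ⟨y, hy, rfl⟩
      show G.cls F y ⊆ G.smul (G.smul (G.cls F a) F) (G.cls F b)
      refine (cls_subset_iff hF (sat_help (smul_F_cls hF a) (smul_cls_F hF b))).2 ?_
      exact smul_mono
        (smul_mono (Set.singleton_subset_iff.2 (mem_cls_self hF a)) subset_rfl)
        (Set.singleton_subset_iff.2 (mem_cls_self hF b)) hy
  · intro h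
    exact Subtype.ext (sstar_cls hF h)
end

section
/- Let H be a hypergroup with a central series 1 = T₀ ⊆ T₁ ⊆ ⋯ ⊆ Tₙ = H (meaning each Tᵢ is closed and Tᵢ//Tᵢ₋₁ ⊆ Z(H//Tᵢ₋₁) for 1 ≤ i ≤ n). Then Tᵢ ⊆ Zᵢ(H) for each 0 ≤ i ≤ n, where Zᵢ(H) is the i-th term of the upper central series. In particular, a hypergroup possessing a central series is weakly nilpotent. -/
namespace HGAux

open Hypergroup

variable {H : Type*} (G : Hypergroup H)

lemma mem_hmul_one (s : H) : s ∈ G.hmul s G.one := by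
  rw [G.hmul_one]; rfl

lemma one_mem_star_hmul (s : H) : G.one ∈ G.hmul (G.star s) s :=
  G.inv_left s G.one s (mem_hmul_one G s)

lemma star_star (s : H) : G.star (G.star s) = s := by
  have h := G.inv_left (G.star s) s G.one (one_mem_star_hmul G s)
  rw [G.hmul_one] at h
  exact h.symm

lemma one_mem_hmul_star (s : H) : G.one ∈ G.hmul s (G.star s) := by
  have h := one_mem_star_hmul G (G.star s)
  rwa [star_star] at h

lemma hmul_one_left (k : H) : G.hmul G.one k = {k} := by
  ext x
  constructor
  · intro hx
    have h1 := G.inv_right G.one k x hx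
    have h2 := G.inv_left x (G.star k) G.one h1
    rw [G.hmul_one] at h2
    have : G.star k = G.star x := h2
    have := congrArg G.star this
    rw [star_star, star_star] at this
    exact this.symm
  · intro hx
    have hx' : x = k := hx
    subst hx'
    have h := G.inv_right x (G.star x) G.one (one_mem_hmul_star G x)
    rwa [star_star] at h

lemma mem_one_hmul (k : H) : k ∈ G.hmul G.one k := by
  rw [hmul_one_left]; rfl

lemma star_one : G.star G.one = G.one := by
  have h1 : G.one ∈ G.hmul G.one G.one := mem_hmul_one G G.one
  have h2 := G.inv_left G.one G.one G.one h1
  rw [G.hmul_one] at h2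
  exact h2.symm

lemma star_mem_hmul {p q x : H} (hx : x ∈ G.hmul p q) :
    G.star x ∈ G.hmul (G.star q) (G.star p) := by
  have h1 := G.inv_left p q x hx
  have h2 := G.inv_right (G.star p) x q h1
  exact G.inv_left q (G.star x) (G.star p) h2

lemma assoc_mem₁ {q r p x c : H} (hx : x ∈ G.hmul q r) (hc : c ∈ G.hmul p x) :
    ∃ w ∈ G.hmul p q, c ∈ G.hmul w r := by
  have h : c ∈ ⋃ y ∈ G.hmul q r, G.hmul p y := Set.mem_biUnion hx hc
  rw [G.assoc] at h
  simpa using h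

lemma assoc_mem₂ {p q r w c : H} (hw : w ∈ G.hmul p q) (hc : c ∈ G.hmul w r) :
    ∃ x ∈ G.hmul q r, c ∈ G.hmul p x := by
  have h : c ∈ ⋃ y ∈ G.hmul p q, G.hmul y r := Set.mem_biUnion hw hc
  rw [← G.assoc] at h
  simpa using h

lemma hmul_nonempty (p q : H) : (G.hmul p q).Nonempty := by
  obtain ⟨w, hw, -⟩ := assoc_mem₁ G (one_mem_hmul_star G q) (mem_hmul_one G p)
  exact ⟨w, hw⟩

lemma mem_smul {A B : Set H} {x : H} :
    x ∈ G.smul A B ↔ ∃ a ∈ A, ∃ b ∈ B, x ∈ G.hmul a b := by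
  simp [Hypergroup.smul]

end HGAux
namespace HGAux

variable {H : Type*} (G : Hypergroup H)

/-- The key invariant: a closed normal subset. -/
structure Good (S : Set H) : Prop where
  one_mem : G.one ∈ S
  star_mem : ∀ a ∈ S, G.star a ∈ S
  mul_mem : ∀ a ∈ S, ∀ b ∈ S, G.hmul a b ⊆ S
  normR : ∀ k s x, s ∈ S → x ∈ G.hmul s k → ∃ t ∈ S, x ∈ G.hmul k t
  normL : ∀ k s x, s ∈ S → x ∈ G.hmul k s → ∃ t ∈ S, x ∈ G.hmul t k

/-- `d ∈ cS`. -/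
def nrel (S : Set H) (c d : H) : Prop := ∃ s ∈ S, d ∈ G.hmul c s

variable {G} {S : Set H}

lemma nrel_refl (hg : Good G S) (c : H) : nrel G S c c :=
  ⟨G.one, hg.one_mem, mem_hmul_one G c⟩

lemma nrel_symm (hg : Good G S) {c d : H} (h : nrel G S c d) : nrel G S d c := by
  obtain ⟨s, hs, hd⟩ := h
  exact ⟨G.star s, hg.star_mem s hs, G.inv_right c s d hd⟩

lemma nrel_trans (hg : Good G S) {c d e : H} (h1 : nrel G S c d) (h2 : nrel G S d e) :
    nrel G S c e := by
  obtain ⟨s, hs, hd⟩ := h1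
  obtain ⟨t, ht, he⟩ := h2
  obtain ⟨x, hx, hex⟩ := assoc_mem₂ G hd he
  exact ⟨x, hg.mul_mem s hs t ht hx, hex⟩

lemma nrel_star (hg : Good G S) {c d : H} (h : nrel G S c d) :
    nrel G S (G.star c) (G.star d) := by
  obtain ⟨s, hs, hd⟩ := h
  have h1 : G.star d ∈ G.hmul (G.star s) (G.star c) := star_mem_hmul G hd
  obtain ⟨t, ht, h2⟩ := hg.normR (G.star c) (G.star s) (G.star d) (hg.star_mem s hs) h1
  exact ⟨t, ht, h2⟩

lemma mem_of_nrel (hg : Good G S) {c d : H} (hc : c ∈ S) (h : nrel G S c d) : d ∈ S := by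
  obtain ⟨s, hs, hd⟩ := h
  exact hg.mul_mem c hc s hs hd

lemma mem_cls_iff (hg : Good G S) {c x : H} : x ∈ G.cls S c ↔ nrel G S c x := by
  constructor
  · intro hx
    rw [Hypergroup.cls, mem_smul] at hx
    obtain ⟨u, hu, t2, ht2, hx⟩ := hx
    rw [mem_smul] at hu
    obtain ⟨t1, ht1, c', hc', hu⟩ := hu
    have hc'' : c' = c := hc'
    subst hc''
    obtain ⟨t1', ht1', hu'⟩ := hg.normR c' t1 u ht1 hu
    exact nrel_trans hg ⟨t1', ht1', hu'⟩ ⟨t2, ht2, hx⟩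
  · rintro ⟨s, hs, hx⟩
    rw [Hypergroup.cls, mem_smul]
    refine ⟨c, ?_, s, hs, hx⟩
    rw [mem_smul]
    exact ⟨G.one, hg.one_mem, c, rfl, mem_one_hmul G c⟩

lemma cls_eq_of_nrel (hg : Good G S) {c d : H} (h : nrel G S c d) :
    G.cls S c = G.cls S d := by
  ext x
  rw [mem_cls_iff hg, mem_cls_iff hg]
  exact ⟨fun h2 => nrel_trans hg (nrel_symm hg h) h2, fun h2 => nrel_trans hg h h2⟩

lemma cls_self (hg : Good G S) {c : H} (hc : c ∈ S) : G.cls S c = S := by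
  ext x
  rw [mem_cls_iff hg]
  constructor
  · exact fun h => mem_of_nrel hg hc h
  · intro hx
    obtain ⟨u, hu⟩ := hmul_nonempty G x (G.star c)
    have hx2 : x ∈ G.hmul u c := by
      have := G.inv_right x (G.star c) u hu
      rwa [star_star] at this
    have huS : u ∈ S := hg.mul_mem x hx (G.star c) (hg.star_mem c hc) hu
    obtain ⟨t, ht, hx3⟩ := hg.normR c u x huS hx2
    exact ⟨t, ht, hx3⟩

/-- Membership in `cls T c` needing only `1 ∈ T`. -/
lemma mem_cls_self_of_one {T : Set H} (hT : G.one ∈ T) (c : H) : c ∈ G.cls T c := by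
  rw [Hypergroup.cls, mem_smul]
  refine ⟨c, ?_, G.one, hT, mem_hmul_one G c⟩
  rw [mem_smul]
  exact ⟨G.one, hT, c, rfl, mem_one_hmul G c⟩

end HGAux
namespace HGAux

variable {H : Type*} {G : Hypergroup H} {S : Set H}

/-- `h` is "central and thin modulo `S`". -/
structure Cen (G : Hypergroup H) (S : Set H) (h : H) : Prop where
  left : ∀ y c, c ∈ G.hmul h y → ∃ d ∈ G.hmul y h, nrel G S c d
  right : ∀ y c, c ∈ G.hmul y h → ∃ d ∈ G.hmul h y, nrel G S c d
  thin : G.hmul (G.star h) h ⊆ S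

lemma cen_thin₂ (hg : Good G S) {h : H} (hh : Cen G S h) :
    G.hmul h (G.star h) ⊆ S := by
  intro c hc
  obtain ⟨d, hd, hcd⟩ := hh.left (G.star h) c hc
  exact mem_of_nrel hg (hh.thin hd) (nrel_symm hg hcd)

lemma cen_mem (hg : Good G S) {s : H} (hs : s ∈ S) : Cen G S s := by
  refine ⟨?_, ?_, fun c hc => hg.mul_mem _ (hg.star_mem s hs) _ hs hc⟩
  · intro y c hc
    obtain ⟨t, ht, hc2⟩ := hg.normR y s c hs hc
    obtain ⟨d, hd⟩ := hmul_nonempty G y s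
    have hy : y ∈ G.hmul c (G.star t) := G.inv_right y t c hc2
    obtain ⟨x, hx, hdx⟩ := assoc_mem₂ G hy hd
    exact ⟨d, hd, x, hg.mul_mem _ (hg.star_mem t ht) _ hs hx, hdx⟩
  · intro y c hc
    obtain ⟨d, hd⟩ := hmul_nonempty G s y
    obtain ⟨t, ht, hd2⟩ := hg.normR y s d hs hd
    have hy : y ∈ G.hmul c (G.star s) := G.inv_right y s c hc
    obtain ⟨x, hx, hdx⟩ := assoc_mem₂ G hy hd2
    exact ⟨d, hd, x, hg.mul_mem _ (hg.star_mem s hs) _ ht hx, hdx⟩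

lemma cen_star (hg : Good G S) {h : H} (hh : Cen G S h) : Cen G S (G.star h) := by
  refine ⟨?_, ?_, ?_⟩
  · intro y c hc
    have h1 : G.star c ∈ G.hmul (G.star y) h := by
      have := star_mem_hmul G hc
      rwa [star_star] at this
    obtain ⟨d, hd, hcd⟩ := hh.right (G.star y) (G.star c) h1
    refine ⟨G.star d, ?_, ?_⟩
    · have := star_mem_hmul G hd
      rwa [star_star] at this
    · have := nrel_star hg hcd
      rwa [star_star] at this
  · intro y c hc
    have h1 : G.star c ∈ G.hmul h (G.star y) := by
      have := star_mem_hmul G hc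
      rwa [star_star] at this
    obtain ⟨d, hd, hcd⟩ := hh.left (G.star y) (G.star c) h1
    refine ⟨G.star d, ?_, ?_⟩
    · have := star_mem_hmul G hd
      rwa [star_star] at this
    · have := nrel_star hg hcd
      rwa [star_star] at this
  · rw [star_star]
    exact cen_thin₂ hg hh

lemma cen_single (hg : Good G S) {h y c d : H} (hh : Cen G S h)
    (hc : c ∈ G.hmul h y) (hd : d ∈ G.hmul h y) : nrel G S c d := by
  have hy : y ∈ G.hmul (G.star h) c := G.inv_left h y c hc
  obtain ⟨u, hu, hdu⟩ := assoc_mem₁ G hy hd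
  have huS : u ∈ S := cen_thin₂ hg hh hu
  obtain ⟨t, ht, hdt⟩ := hg.normR c u d huS hdu
  exact ⟨t, ht, hdt⟩

lemma cen_hmul (hg : Good G S) {u v x : H} (hu : Cen G S u) (hv : Cen G S v)
    (hx : x ∈ G.hmul u v) : Cen G S x := by
  refine ⟨?_, ?_, ?_⟩
  · -- left
    intro y c hc
    obtain ⟨w, hw, hcw⟩ := assoc_mem₂ G hx hc
    obtain ⟨c₁, hc₁, hwc₁⟩ := hv.left y w hw
    obtain ⟨s, hs, hws⟩ := nrel_symm hg hwc₁
    obtain ⟨e, he, hces⟩ := assoc_mem₁ G hws hcw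
    have hec : nrel G S e c := ⟨s, hs, hces⟩
    obtain ⟨d, hd, hed⟩ := hu.left c₁ e he
    obtain ⟨g, hg', hdg⟩ := assoc_mem₂ G hc₁ hd
    obtain ⟨d', hd', hgd'⟩ := hu.right v g hg'
    have hgx : nrel G S g x := nrel_trans hg hgd' (cen_single hg hu hd' hx)
    obtain ⟨s₄, hs₄, hgs₄⟩ := nrel_symm hg hgx
    obtain ⟨f, hf, hdf⟩ := assoc_mem₁ G hgs₄ hdg
    refine ⟨f, hf, ?_⟩
    have hfd : nrel G S f d := ⟨s₄, hs₄, hdf⟩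
    exact nrel_trans hg (nrel_trans hg (nrel_symm hg hec) hed) (nrel_symm hg hfd)
  · -- right
    intro y c hc
    obtain ⟨w, hw, hcw⟩ := assoc_mem₁ G hx hc
    obtain ⟨c₁, hc₁, hwc₁⟩ := hu.right y w hw
    obtain ⟨s, hs, hws⟩ := nrel_symm hg hwc₁
    obtain ⟨p₁, hp₁, hcp₁⟩ := assoc_mem₂ G hws hcw
    obtain ⟨t, ht, hp₁'⟩ := hg.normR v s p₁ hs hp₁
    obtain ⟨e, he, hcet⟩ := assoc_mem₁ G hp₁' hcp₁
    have hec : nrel G S e c := ⟨t, ht, hcet⟩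
    obtain ⟨g, hg2, heg⟩ := assoc_mem₂ G hc₁ he
    obtain ⟨g', hg'', hgg'⟩ := hv.right y g hg2
    obtain ⟨s₃, hs₃, hgs₃⟩ := nrel_symm hg hgg'
    obtain ⟨e₂, he₂, hee₂⟩ := assoc_mem₁ G hgs₃ heg
    have he₂e : nrel G S e₂ e := ⟨s₃, hs₃, hee₂⟩
    obtain ⟨x₂, hx₂, he₂'⟩ := assoc_mem₁ G hg'' he₂
    have hxx₂ : nrel G S x x₂ := cen_single hg hu hx hx₂
    obtain ⟨s₄, hs₄, hx₂s₄⟩ := hxx₂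
    obtain ⟨p₂, hp₂, he₂''⟩ := assoc_mem₂ G hx₂s₄ he₂'
    obtain ⟨t₅, ht₅, hp₂'⟩ := hg.normR y s₄ p₂ hs₄ hp₂
    obtain ⟨f, hf, he₂f⟩ := assoc_mem₁ G hp₂' he₂''
    refine ⟨f, hf, ?_⟩
    have hfe₂ : nrel G S f e₂ := ⟨t₅, ht₅, he₂f⟩
    exact nrel_trans hg (nrel_trans hg (nrel_symm hg hec) (nrel_symm hg he₂e))
      (nrel_symm hg hfe₂)
  · -- thin
    intro c hc
    have hxs : G.star x ∈ G.hmul (G.star v) (G.star u) := star_mem_hmul G hx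
    obtain ⟨z, hz, hcz⟩ := assoc_mem₁ G hx hc
    obtain ⟨p₁, hp₁, hz'⟩ := assoc_mem₂ G hxs hz
    have hp₁S : p₁ ∈ S := hu.thin hp₁
    obtain ⟨w₁, hw₁, hcw₁⟩ := assoc_mem₂ G hz' hcz
    obtain ⟨t, ht, hw₁'⟩ := hg.normR v p₁ w₁ hp₁S hw₁
    obtain ⟨r₁, hr₁, hcr₁⟩ := assoc_mem₁ G hw₁' hcw₁
    exact hg.mul_mem r₁ (hv.thin hr₁) t ht hcr₁

end HGAux
namespace HGAux

variable {H : Type*} {G : Hypergroup H} {S : Set H}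

lemma mem_smul_singleton_of_one {T : Set H} (hT1 : G.one ∈ T) (h : H) :
    h ∈ G.smul {h} T :=
  (mem_smul G).mpr ⟨h, rfl, G.one, hT1, mem_hmul_one G h⟩

lemma cen_of_qCenterPre {T : Set H} (hT1 : G.one ∈ T) (hTS : T ⊆ S) (hg : Good G S)
    {h : H} (hq : h ∈ G.qCenterPre T) : Cen G S h := by
  obtain ⟨hq1, hq2⟩ := hq
  refine ⟨?_, ?_, ?_⟩
  · -- left
    intro y c hc
    have hcmem : c ∈ G.smul (G.smul {h} T) {y} :=
      (mem_smul G).mpr ⟨h, mem_smul_singleton_of_one hT1 h, y, rfl, hc⟩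
    have himg : G.cls T c ∈ G.cls T '' (G.smul (G.smul {y} T) {h}) := by
      rw [← hq1 y]; exact ⟨c, hcmem, rfl⟩
    obtain ⟨d₀, hd₀, heq⟩ := himg
    have hc2 : c ∈ G.cls T d₀ := by rw [heq]; exact mem_cls_self_of_one hT1 c
    rw [Hypergroup.cls, mem_smul G] at hc2
    obtain ⟨u, hu, t₂, ht₂, hct₂⟩ := hc2
    rw [mem_smul G] at hu
    obtain ⟨t₁, ht₁, d₀', hd₀', hu⟩ := hu
    rw [Set.mem_singleton_iff] at hd₀'; subst hd₀'
    rw [mem_smul G] at hd₀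
    obtain ⟨w, hw, h', hh', hd₀w⟩ := hd₀
    rw [Set.mem_singleton_iff] at hh'; subst hh'
    rw [mem_smul G] at hw
    obtain ⟨y', hy', t, ht, hw⟩ := hw
    rw [Set.mem_singleton_iff] at hy'; subst hy'
    -- chase
    have huc : nrel G S u c := ⟨t₂, hTS ht₂, hct₂⟩
    obtain ⟨t₁', ht₁', hu'⟩ := hg.normR _ t₁ u (hTS ht₁) hu
    have hd₀u : nrel G S d₀' u := ⟨t₁', ht₁', hu'⟩
    obtain ⟨v, hv, hd₀v⟩ := assoc_mem₂ G hw hd₀w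
    obtain ⟨t₃, ht₃, hv'⟩ := hg.normR _ t v (hTS ht) hv
    obtain ⟨f, hf, hd₀f⟩ := assoc_mem₁ G hv' hd₀v
    have hfd₀ : nrel G S f d₀' := ⟨t₃, ht₃, hd₀f⟩
    exact ⟨f, hf, nrel_symm hg (nrel_trans hg (nrel_trans hg hfd₀ hd₀u) huc)⟩
  · -- right
    intro y c hc
    have hcmem : c ∈ G.smul (G.smul {y} T) {h} :=
      (mem_smul G).mpr ⟨y, mem_smul_singleton_of_one hT1 y, h, rfl, hc⟩
    have himg : G.cls T c ∈ G.cls T '' (G.smul (G.smul {h} T) {y}) := by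
      rw [hq1 y]; exact ⟨c, hcmem, rfl⟩
    obtain ⟨d₀, hd₀, heq⟩ := himg
    have hc2 : c ∈ G.cls T d₀ := by rw [heq]; exact mem_cls_self_of_one hT1 c
    rw [Hypergroup.cls, mem_smul G] at hc2
    obtain ⟨u, hu, t₂, ht₂, hct₂⟩ := hc2
    rw [mem_smul G] at hu
    obtain ⟨t₁, ht₁, d₀', hd₀', hu⟩ := hu
    rw [Set.mem_singleton_iff] at hd₀'; subst hd₀'
    rw [mem_smul G] at hd₀
    obtain ⟨w, hw, y', hy', hd₀w⟩ := hd₀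
    rw [Set.mem_singleton_iff] at hy'; subst hy'
    rw [mem_smul G] at hw
    obtain ⟨h', hh', t, ht, hw⟩ := hw
    rw [Set.mem_singleton_iff] at hh'; subst hh'
    have huc : nrel G S u c := ⟨t₂, hTS ht₂, hct₂⟩
    obtain ⟨t₁', ht₁', hu'⟩ := hg.normR _ t₁ u (hTS ht₁) hu
    have hd₀u : nrel G S d₀' u := ⟨t₁', ht₁', hu'⟩
    obtain ⟨v, hv, hd₀v⟩ := assoc_mem₂ G hw hd₀w
    obtain ⟨t₃, ht₃, hv'⟩ := hg.normR _ t v (hTS ht) hv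
    obtain ⟨f, hf, hd₀f⟩ := assoc_mem₁ G hv' hd₀v
    have hfd₀ : nrel G S f d₀' := ⟨t₃, ht₃, hd₀f⟩
    exact ⟨f, hf, nrel_symm hg (nrel_trans hg (nrel_trans hg hfd₀ hd₀u) huc)⟩
  · -- thin
    intro c hc
    have hcmem : c ∈ G.smul (G.smul {G.star h} T) {h} :=
      (mem_smul G).mpr ⟨G.star h, mem_smul_singleton_of_one hT1 _, h, rfl, hc⟩
    have himg : G.cls T c ∈ ({T} : Set (Set H)) := by
      rw [← hq2]; exact ⟨c, hcmem, rfl⟩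
    rw [Set.mem_singleton_iff] at himg
    have : c ∈ T := by
      have := mem_cls_self_of_one hT1 c
      rwa [himg] at this
    exact hTS this

lemma qCenterPre_of_cen (hg : Good G S) {h : H} (hc : Cen G S h) :
    h ∈ G.qCenterPre S := by
  constructor
  · intro y
    apply Set.Subset.antisymm
    · rintro X ⟨c, hcmem, rfl⟩
      rw [mem_smul G] at hcmem
      obtain ⟨w, hw, y', hy', hcw⟩ := hcmem
      rw [Set.mem_singleton_iff] at hy'; subst hy'
      rw [mem_smul G] at hw
      obtain ⟨h', hh', s, hs, hw⟩ := hw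
      rw [Set.mem_singleton_iff] at hh'; subst hh'
      obtain ⟨v, hv, hcv⟩ := assoc_mem₂ G hw hcw
      obtain ⟨s₂, hs₂, hv'⟩ := hg.normR _ s v hs hv
      obtain ⟨e, he, hce⟩ := assoc_mem₁ G hv' hcv
      have hec : nrel G S e c := ⟨s₂, hs₂, hce⟩
      obtain ⟨d, hd, hed⟩ := hc.left y' e he
      have hcd : nrel G S c d := nrel_trans hg (nrel_symm hg hec) hed
      refine ⟨d, ?_, (cls_eq_of_nrel hg hcd).symm⟩
      exact (mem_smul G).mpr ⟨y', mem_smul_singleton_of_one hg.one_mem y', h', rfl, hd⟩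
    · rintro X ⟨c, hcmem, rfl⟩
      rw [mem_smul G] at hcmem
      obtain ⟨w, hw, h', hh', hcw⟩ := hcmem
      rw [Set.mem_singleton_iff] at hh'; subst hh'
      rw [mem_smul G] at hw
      obtain ⟨y', hy', s, hs, hw⟩ := hw
      rw [Set.mem_singleton_iff] at hy'; subst hy'
      obtain ⟨v, hv, hcv⟩ := assoc_mem₂ G hw hcw
      obtain ⟨s₂, hs₂, hv'⟩ := hg.normR _ s v hs hv
      obtain ⟨e, he, hce⟩ := assoc_mem₁ G hv' hcv
      have hec : nrel G S e c := ⟨s₂, hs₂, hce⟩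
      obtain ⟨d, hd, hed⟩ := hc.right y' e he
      have hcd : nrel G S c d := nrel_trans hg (nrel_symm hg hec) hed
      refine ⟨d, ?_, (cls_eq_of_nrel hg hcd).symm⟩
      exact (mem_smul G).mpr ⟨h', mem_smul_singleton_of_one hg.one_mem h', y', rfl, hd⟩
  · have hsub : G.smul (G.smul {G.star h} S) {h} ⊆ S := by
      intro c hcmem
      rw [mem_smul G] at hcmem
      obtain ⟨w, hw, h', hh', hcw⟩ := hcmem
      rw [Set.mem_singleton_iff] at hh'; subst hh'
      rw [mem_smul G] at hw
      obtain ⟨hs', hhs', s, hs, hw⟩ := hw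
      rw [Set.mem_singleton_iff] at hhs'; subst hhs'
      obtain ⟨v, hv, hcv⟩ := assoc_mem₂ G hw hcw
      obtain ⟨t₃, ht₃, hv'⟩ := hg.normR _ s v hs hv
      obtain ⟨e, he, hce⟩ := assoc_mem₁ G hv' hcv
      exact hg.mul_mem e (hc.thin he) t₃ ht₃ hce
    ext X
    rw [Set.mem_singleton_iff]
    constructor
    · rintro ⟨c, hcmem, rfl⟩
      exact cls_self hg (hsub hcmem)
    · intro hX
      rw [hX]
      obtain ⟨c, hcel⟩ := hmul_nonempty G (G.star h) h
      have hcmem : c ∈ G.smul (G.smul {G.star h} S) {h} :=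
        (mem_smul G).mpr ⟨G.star h, mem_smul_singleton_of_one hg.one_mem _, h, rfl, hcel⟩
      exact ⟨c, hcmem, cls_self hg (hsub hcmem)⟩

lemma good_step (hg : Good G S) : Good G (G.qCenterPre S) := by
  have cen_of : ∀ a ∈ G.qCenterPre S, Cen G S a := fun a ha =>
    cen_of_qCenterPre hg.one_mem subset_rfl hg ha
  refine ⟨?_, ?_, ?_, ?_, ?_⟩
  · exact qCenterPre_of_cen hg (cen_mem hg hg.one_mem)
  · exact fun a ha => qCenterPre_of_cen hg (cen_star hg (cen_of a ha))
  · exact fun a ha b hb x hx =>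
      qCenterPre_of_cen hg (cen_hmul hg (cen_of a ha) (cen_of b hb) hx)
  · intro k s x hs hx
    obtain ⟨d, hd, hxd⟩ := (cen_of s hs).left k x hx
    obtain ⟨s₂, hs₂, hx2⟩ := nrel_symm hg hxd
    obtain ⟨v, hv, hx3⟩ := assoc_mem₂ G hd hx2
    exact ⟨v, qCenterPre_of_cen hg (cen_hmul hg (cen_of s hs) (cen_mem hg hs₂) hv), hx3⟩
  · intro k s x hs hx
    obtain ⟨d, hd, hxd⟩ := (cen_of s hs).right k x hx
    obtain ⟨s₂, hs₂, hx2⟩ := nrel_symm hg hxd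
    obtain ⟨p₁, hp₁, hx3⟩ := assoc_mem₂ G hd hx2
    obtain ⟨t, ht, hp₁'⟩ := hg.normL _ s₂ p₁ hs₂ hp₁
    obtain ⟨q, hq, hx4⟩ := assoc_mem₁ G hp₁' hx3
    exact ⟨q, qCenterPre_of_cen hg (cen_hmul hg (cen_of s hs) (cen_mem hg ht) hq), hx4⟩

lemma good_one : Good G ({G.one} : Set H) := by
  refine ⟨rfl, ?_, ?_, ?_, ?_⟩
  · rintro a rfl
    exact star_one G
  · rintro a rfl b rfl
    rw [G.hmul_one]
  · rintro k s x rfl hx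
    rw [hmul_one_left] at hx
    rw [Set.mem_singleton_iff] at hx; subst hx
    exact ⟨G.one, rfl, mem_hmul_one G x⟩
  · rintro k s x rfl hx
    rw [G.hmul_one, Set.mem_singleton_iff] at hx; subst hx
    exact ⟨G.one, rfl, mem_one_hmul G x⟩

lemma good_upper : ∀ i, Good G (G.upperCentral i) := by
  intro i
  induction i with
  | zero => exact good_one
  | succ i ih => exact good_step ih

lemma one_mem_of_closed {F : Set H} (hF : G.IsClosed F) : G.one ∈ F := by
  obtain ⟨⟨a, ha⟩, hsub⟩ := hF
  apply hsub
  exact (mem_smul G).mpr ⟨G.star a, ⟨a, ha, rfl⟩, a, ha, one_mem_star_hmul G a⟩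

end HGAux
/-- if `1 = T₀ ⊆ T₁ ⊆ ⋯ ⊆ Tₙ = H` is a central series (each `Tᵢ`
closed and `Tᵢ₊₁//Tᵢ ⊆ Z(H//Tᵢ)`), then `Tᵢ ⊆ Zᵢ(H)` for all `i ≤ n`;
in particular a hypergroup possessing a central series is weakly nilpotent. -/
theorem central_series_le_upperCentral {H : Type*} (G : Hypergroup H)
    (n : ℕ) (T : ℕ → Set H)
    (h0 : T 0 = {G.one}) (hn : T n = Set.univ)
    (hclosed : ∀ i ≤ n, G.IsClosed (T i))
    (hmono : ∀ i < n, T i ⊆ T (i + 1))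
    (hcentral : ∀ i < n, T (i + 1) ⊆ G.qCenterPre (T i)) :
    (∀ i ≤ n, T i ⊆ G.upperCentral i) ∧ G.WeaklyNilpotent := by
  have key : ∀ i, i ≤ n → T i ⊆ G.upperCentral i := by
    intro i
    induction i with
    | zero =>
      intro _
      rw [h0]
      exact subset_rfl
    | succ i ih =>
      intro hin
      have hilt : i < n := Nat.lt_of_succ_le hin
      have hile : i ≤ n := le_of_lt hilt
      intro x hx
      have hq : x ∈ G.qCenterPre (T i) := hcentral i hilt hx
      have hT1 : G.one ∈ T i := HGAux.one_mem_of_closed (hclosed i hile)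
      have hcen := HGAux.cen_of_qCenterPre hT1 (ih hile) (HGAux.good_upper i) hq
      exact HGAux.qCenterPre_of_cen (HGAux.good_upper i) hcen
  refine ⟨key, n, ?_⟩
  apply Set.eq_univ_of_univ_subset
  rw [← hn]
  exact key n le_rfl
end
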